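/- Let λ = (λ₁, λ₂, λ₃) be a probability vector with positive entries in nondecreasing order satisfying √λ₁ + √λ₂ ≤ √λ₃. Set s₁₁ = λ₁/3 + (4/9)√(λ₁λ₂), s₂₂ = λ₂/3 + (4/9)√(λ₁λ₂), s₃₃ = λ₃/3, s₁₂ = (7/9)√(λ₁λ₂), s₁₃ = (1/3)√(λ₁λ₃), s₂₃ = (1/3)√(λ₂λ₃), and a_{ij} = √(λ_iλ_j) for i > j. Then: (i) s_{ij} ≥ √(λ_iλ_j)/3 and a_{ij} ≥ √(λ_iλ_j) for all i ≥ j resp. i > j; (ii) the operator ∑_{i≥j} s_{ij} σ_{ij}^Γ + ∑_{i>j} a_{ij} α_{ij}^Γ on ℂ³⊗ℂ³ is positive semidefinite; (iii) ∑_{i≥j} s_{ij} + ∑_{i>j} a_{ij} = (1 + 4√(λ₂λ₃) + 4√(λ₁λ₃) + 8√(λ₁λ₂))/3. -/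

import Mathlib

/-- The basis vector `|ij⟩` of `ℂ³ ⊗ ℂ³` (real coefficients). -/
def ketR (i j : Fin 3) : Fin 3 × Fin 3 → ℝ := fun p => if p = (i, j) then 1 else 0

/-- `σ_{ij} = (|ij⟩+|ji⟩)(⟨ij|+⟨ji|)/2` for `i ≠ j`, `σ_{ii} = |ii⟩⟨ii|`. -/
noncomputable def sigmaOp (i j : Fin 3) : Matrix (Fin 3 × Fin 3) (Fin 3 × Fin 3) ℝ :=
  if i = j then Matrix.vecMulVec (ketR i i) (ketR i i)
  else (1/2 : ℝ) • Matrix.vecMulVec (ketR i j + ketR j i) (ketR i j + ketR j i)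

/-- `α_{ij} = (|ij⟩−|ji⟩)(⟨ij|−⟨ji|)/2`. -/
noncomputable def alphaOp (i j : Fin 3) : Matrix (Fin 3 × Fin 3) (Fin 3 × Fin 3) ℝ :=
  (1/2 : ℝ) • Matrix.vecMulVec (ketR i j - ketR j i) (ketR i j - ketR j i)

/-- Partial transpose: `(|ij⟩⟨kl|)^Γ = |il⟩⟨kj|`. -/
def ptransR (M : Matrix (Fin 3 × Fin 3) (Fin 3 × Fin 3) ℝ) :
    Matrix (Fin 3 × Fin 3) (Fin 3 × Fin 3) ℝ :=
  fun p q => M (p.1, q.2) (q.1, p.2)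

section aux
open Matrix

lemma psd_vecMulVec {n : Type*} [Fintype n] (v : n → ℝ) : (Matrix.vecMulVec v v).PosSemidef := by
  rw [Matrix.posSemidef_iff_dotProduct_mulVec]
  constructor
  · ext i j
    simp [Matrix.vecMulVec_apply, Matrix.conjTranspose_apply, mul_comm]
  · intro x
    have h : (Matrix.vecMulVec v v).mulVec x = (v ⬝ᵥ x) • v := by
      ext i
      simp only [Matrix.mulVec, Matrix.vecMulVec_apply, dotProduct, Pi.smul_apply,
        smul_eq_mul, Finset.sum_mul]
      exact Finset.sum_congr rfl fun j _ => by ring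
    rw [h, dotProduct_smul, star_trivial, dotProduct_comm]
    simpa using mul_self_nonneg (x ⬝ᵥ v)

lemma psd_add {n : Type*} [Fintype n] {A B : Matrix n n ℝ} (hA : A.PosSemidef)
    (hB : B.PosSemidef) : (A + B).PosSemidef := by
  refine Matrix.PosSemidef.of_dotProduct_mulVec_nonneg (hA.1.add hB.1) fun x => ?_
  have := add_nonneg (hA.dotProduct_mulVec_nonneg x) (hB.dotProduct_mulVec_nonneg x)
  simpa [Matrix.add_mulVec, dotProduct_add] using this

lemma psd_smul {n : Type*} [Fintype n] {A : Matrix n n ℝ} (hA : A.PosSemidef) {c : ℝ}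
    (hc : 0 ≤ c) : (c • A).PosSemidef := by
  refine Matrix.PosSemidef.of_dotProduct_mulVec_nonneg ?_ fun x => ?_
  · unfold Matrix.IsHermitian at *
    rw [Matrix.conjTranspose_smul, hA.1]
    simp
  · have := mul_nonneg hc (hA.dotProduct_mulVec_nonneg x)
    simpa [Matrix.smul_mulVec, dotProduct_smul] using this

lemma vv_add_left (u v w : Fin 3 × Fin 3 → ℝ) :
    vecMulVec (u + v) w = vecMulVec u w + vecMulVec v w := by
  ext i j; simp [vecMulVec_apply, add_mul]

lemma vv_add_right (u v w : Fin 3 × Fin 3 → ℝ) :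
    vecMulVec u (v + w) = vecMulVec u v + vecMulVec u w := by
  ext i j; simp [vecMulVec_apply, mul_add]

lemma vv_sub_left (u v w : Fin 3 × Fin 3 → ℝ) :
    vecMulVec (u - v) w = vecMulVec u w - vecMulVec v w := by
  ext i j; simp [vecMulVec_apply, sub_mul]

lemma vv_sub_right (u v w : Fin 3 × Fin 3 → ℝ) :
    vecMulVec u (v - w) = vecMulVec u v - vecMulVec u w := by
  ext i j; simp [vecMulVec_apply, mul_sub]

lemma vv_smul_left (c : ℝ) (u w : Fin 3 × Fin 3 → ℝ) :
    vecMulVec (c • u) w = c • vecMulVec u w := by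
  ext i j; simp [vecMulVec_apply, mul_assoc]

lemma vv_smul_right (c : ℝ) (u w : Fin 3 × Fin 3 → ℝ) :
    vecMulVec u (c • w) = c • vecMulVec u w := by
  ext i j; simp [vecMulVec_apply]; ring

lemma ptransR_add (A B : Matrix (Fin 3 × Fin 3) (Fin 3 × Fin 3) ℝ) :
    ptransR (A + B) = ptransR A + ptransR B := rfl

lemma ptransR_sub (A B : Matrix (Fin 3 × Fin 3) (Fin 3 × Fin 3) ℝ) :
    ptransR (A - B) = ptransR A - ptransR B := rfl

lemma ptransR_smul (c : ℝ) (A : Matrix (Fin 3 × Fin 3) (Fin 3 × Fin 3) ℝ) :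
    ptransR (c • A) = c • ptransR A := rfl

lemma ptransR_vv (i j k l : Fin 3) :
    ptransR (vecMulVec (ketR i j) (ketR k l)) = vecMulVec (ketR i l) (ketR k j) := by
  ext ⟨p1, p2⟩ ⟨q1, q2⟩
  simp only [ptransR, vecMulVec_apply, ketR, Prod.mk.injEq]
  by_cases h1 : p1 = i <;> by_cases h2 : p2 = l <;> by_cases h3 : q1 = k <;>
    by_cases h4 : q2 = j <;> simp [h1, h2, h3, h4]

lemma ptransR_sigma_diag (i : Fin 3) :
    ptransR (sigmaOp i i) = vecMulVec (ketR i i) (ketR i i) := by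
  rw [sigmaOp, if_pos rfl, ptransR_vv]

lemma ptransR_sigma_ne {i j : Fin 3} (h : i ≠ j) :
    ptransR (sigmaOp i j) = (1/2 : ℝ) • (vecMulVec (ketR i j) (ketR i j)
      + vecMulVec (ketR i i) (ketR j j) + vecMulVec (ketR j j) (ketR i i)
      + vecMulVec (ketR j i) (ketR j i)) := by
  rw [sigmaOp, if_neg h, ptransR_smul, vv_add_left, vv_add_right, vv_add_right,
    ptransR_add, ptransR_add, ptransR_add, ptransR_vv, ptransR_vv, ptransR_vv, ptransR_vv]
  module

lemma ptransR_alpha (i j : Fin 3) :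
    ptransR (alphaOp i j) = (1/2 : ℝ) • (vecMulVec (ketR i j) (ketR i j)
      - vecMulVec (ketR i i) (ketR j j) - vecMulVec (ketR j j) (ketR i i)
      + vecMulVec (ketR j i) (ketR j i)) := by
  rw [alphaOp, ptransR_smul, vv_sub_left, vv_sub_right, vv_sub_right,
    ptransR_sub, ptransR_sub, ptransR_sub, ptransR_vv, ptransR_vv, ptransR_vv, ptransR_vv]
  module

/-- Vector `r|22⟩ - p|00⟩ - q|11⟩`. -/
noncomputable def vA (p q r : ℝ) : Fin 3 × Fin 3 → ℝ :=
  r • ketR 2 2 - p • ketR 0 0 - q • ketR 1 1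

/-- Vector `|00⟩ - |11⟩`. -/
noncomputable def vB : Fin 3 × Fin 3 → ℝ := ketR 0 0 - ketR 1 1

lemma matrix_decomp (p q r : ℝ) :
    (p*p/3 + 4/9*(p*q)) • ptransR (sigmaOp 0 0)
    + (7/9*(p*q)) • ptransR (sigmaOp 1 0)
    + (q*q/3 + 4/9*(p*q)) • ptransR (sigmaOp 1 1)
    + (1/3*(p*r)) • ptransR (sigmaOp 2 0)
    + (1/3*(q*r)) • ptransR (sigmaOp 2 1)
    + (r*r/3) • ptransR (sigmaOp 2 2)
    + (p*q) • ptransR (alphaOp 1 0)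
    + (p*r) • ptransR (alphaOp 2 0)
    + (q*r) • ptransR (alphaOp 2 1)
    = (1/3 : ℝ) • Matrix.vecMulVec (vA p q r) (vA p q r)
    + (4/9*(p*q)) • Matrix.vecMulVec vB vB
    + (8/9*(p*q)) • (Matrix.vecMulVec (ketR 1 0) (ketR 1 0) + Matrix.vecMulVec (ketR 0 1) (ketR 0 1))
    + (2/3*(p*r)) • (Matrix.vecMulVec (ketR 2 0) (ketR 2 0) + Matrix.vecMulVec (ketR 0 2) (ketR 0 2))
    + (2/3*(q*r)) • (Matrix.vecMulVec (ketR 2 1) (ketR 2 1) + Matrix.vecMulVec (ketR 1 2) (ketR 1 2)) := by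
  rw [ptransR_sigma_diag, ptransR_sigma_diag, ptransR_sigma_diag,
    ptransR_sigma_ne (by decide : (1:Fin 3) ≠ 0), ptransR_sigma_ne (by decide : (2:Fin 3) ≠ 0),
    ptransR_sigma_ne (by decide : (2:Fin 3) ≠ 1), ptransR_alpha, ptransR_alpha, ptransR_alpha]
  simp only [vA, vB, vv_sub_left, vv_sub_right, vv_smul_left, vv_smul_right]
  module

end aux

/-- The explicit point `(s*, a*)` is feasible for the primal SDP with
`K = 2` and attains objective value `(1 + 4√(λ₂λ₃) + 4√(λ₁λ₃) + 8√(λ₁λ₂))/3`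
(indices 0-based: `l 0 = λ₁ ≤ l 1 = λ₂ ≤ l 2 = λ₃`). -/
theorem stmt16 (l : Fin 3 → ℝ) (hpos : 0 < l 0) (h01 : l 0 ≤ l 1) (h12 : l 1 ≤ l 2)
    (hsum : l 0 + l 1 + l 2 = 1)
    (hsqrt : Real.sqrt (l 0) + Real.sqrt (l 1) ≤ Real.sqrt (l 2))
    (s a : Fin 3 → Fin 3 → ℝ)
    (hs00 : s 0 0 = l 0 / 3 + (4/9) * Real.sqrt (l 0 * l 1))
    (hs11 : s 1 1 = l 1 / 3 + (4/9) * Real.sqrt (l 0 * l 1))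
    (hs22 : s 2 2 = l 2 / 3)
    (hs10 : s 1 0 = (7/9) * Real.sqrt (l 0 * l 1))
    (hs20 : s 2 0 = (1/3) * Real.sqrt (l 0 * l 2))
    (hs21 : s 2 1 = (1/3) * Real.sqrt (l 1 * l 2))
    (ha : ∀ i j : Fin 3, j < i → a i j = Real.sqrt (l i * l j)) :
    (∀ i j : Fin 3, j ≤ i → Real.sqrt (l i * l j) / 3 ≤ s i j) ∧
    (∀ i j : Fin 3, j < i → Real.sqrt (l i * l j) ≤ a i j) ∧
    (∑ i, ∑ j ∈ Finset.univ.filter (fun j => j ≤ i), s i j • ptransR (sigmaOp i j)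
      + ∑ i, ∑ j ∈ Finset.univ.filter (fun j => j < i), a i j • ptransR (alphaOp i j)).PosSemidef ∧
    (∑ i, ∑ j ∈ Finset.univ.filter (fun j => j ≤ i), s i j)
      + (∑ i, ∑ j ∈ Finset.univ.filter (fun j => j < i), a i j)
      = (1 + 4 * Real.sqrt (l 1 * l 2) + 4 * Real.sqrt (l 0 * l 2)
          + 8 * Real.sqrt (l 0 * l 1)) / 3 := by
  have hl0 : (0:ℝ) ≤ l 0 := hpos.le
  have hl1 : (0:ℝ) ≤ l 1 := le_trans hl0 h01
  have hl2 : (0:ℝ) ≤ l 2 := le_trans hl1 h12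
  set p := Real.sqrt (l 0) with hpdef
  set q := Real.sqrt (l 1) with hqdef
  set r := Real.sqrt (l 2) with hrdef
  have hp : 0 ≤ p := Real.sqrt_nonneg _
  have hq : 0 ≤ q := Real.sqrt_nonneg _
  have hr : 0 ≤ r := Real.sqrt_nonneg _
  have e01 : Real.sqrt (l 0 * l 1) = p * q := Real.sqrt_mul hl0 _
  have e02 : Real.sqrt (l 0 * l 2) = p * r := Real.sqrt_mul hl0 _
  have e12 : Real.sqrt (l 1 * l 2) = q * r := Real.sqrt_mul hl1 _
  have e10 : Real.sqrt (l 1 * l 0) = q * p := Real.sqrt_mul hl1 _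
  have e20 : Real.sqrt (l 2 * l 0) = r * p := Real.sqrt_mul hl2 _
  have e21 : Real.sqrt (l 2 * l 1) = r * q := Real.sqrt_mul hl2 _
  have e00 : Real.sqrt (l 0 * l 0) = l 0 := Real.sqrt_mul_self hl0
  have e11 : Real.sqrt (l 1 * l 1) = l 1 := Real.sqrt_mul_self hl1
  have e22 : Real.sqrt (l 2 * l 2) = l 2 := Real.sqrt_mul_self hl2
  have hpq : 0 ≤ p * q := mul_nonneg hp hq
  have hpr : 0 ≤ p * r := mul_nonneg hp hr
  have hqr : 0 ≤ q * r := mul_nonneg hq hr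
  have ha10 := ha 1 0 (by decide)
  have ha20 := ha 2 0 (by decide)
  have ha21 := ha 2 1 (by decide)
  rw [e10] at ha10; rw [e20] at ha20; rw [e21] at ha21
  refine ⟨?_, ?_, ?_, ?_⟩
  · -- feasibility of s
    have c00 : Real.sqrt (l 0 * l 0) / 3 ≤ s 0 0 := by rw [e00, hs00, e01]; linarith
    have c11 : Real.sqrt (l 1 * l 1) / 3 ≤ s 1 1 := by rw [e11, hs11, e01]; linarith
    have c22 : Real.sqrt (l 2 * l 2) / 3 ≤ s 2 2 := by rw [e22, hs22]
    have c10 : Real.sqrt (l 1 * l 0) / 3 ≤ s 1 0 := by rw [e10, hs10, e01]; linarith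
    have c20 : Real.sqrt (l 2 * l 0) / 3 ≤ s 2 0 := by rw [e20, hs20, e02]; linarith
    have c21 : Real.sqrt (l 2 * l 1) / 3 ≤ s 2 1 := by rw [e21, hs21, e12]; linarith
    intro i j hij
    fin_cases i <;> fin_cases j <;>
      first
        | exact absurd hij (by decide)
        | exact c00 | exact c11 | exact c22 | exact c10 | exact c20 | exact c21
  · intro i j hij
    rw [ha i j hij]
  · -- positive semidefiniteness
    have hMsum : (∑ i, ∑ j ∈ Finset.univ.filter (fun j => j ≤ i), s i j • ptransR (sigmaOp i j)
        + ∑ i, ∑ j ∈ Finset.univ.filter (fun j => j < i), a i j • ptransR (alphaOp i j))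
        = (p*p/3 + 4/9*(p*q)) • ptransR (sigmaOp 0 0)
          + (7/9*(p*q)) • ptransR (sigmaOp 1 0)
          + (q*q/3 + 4/9*(p*q)) • ptransR (sigmaOp 1 1)
          + (1/3*(p*r)) • ptransR (sigmaOp 2 0)
          + (1/3*(q*r)) • ptransR (sigmaOp 2 1)
          + (r*r/3) • ptransR (sigmaOp 2 2)
          + (p*q) • ptransR (alphaOp 1 0)
          + (p*r) • ptransR (alphaOp 2 0)
          + (q*r) • ptransR (alphaOp 2 1) := by
      have hl0' : l 0 = p * p := (Real.mul_self_sqrt hl0).symm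
      have hl1' : l 1 = q * q := (Real.mul_self_sqrt hl1).symm
      have hl2' : l 2 = r * r := (Real.mul_self_sqrt hl2).symm
      simp only [Fin.sum_univ_three, Finset.sum_filter]
      norm_num [Fin.le_def, Fin.lt_def, Fin.ext_iff]
      rw [hs00, hs11, hs22, hs10, hs20, hs21, ha10, ha20, ha21, e01, e02, e12,
        hl0', hl1', hl2']
      module
    rw [hMsum, matrix_decomp p q r]
    refine psd_add (psd_add (psd_add (psd_add
      (psd_smul (psd_vecMulVec _) (by norm_num))
      (psd_smul (psd_vecMulVec _) (by linarith))) ?_) ?_) ?_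
    · exact psd_smul (psd_add (psd_vecMulVec _) (psd_vecMulVec _)) (by linarith)
    · exact psd_smul (psd_add (psd_vecMulVec _) (psd_vecMulVec _)) (by linarith)
    · exact psd_smul (psd_add (psd_vecMulVec _) (psd_vecMulVec _)) (by linarith)
  · -- objective value
    simp only [Fin.sum_univ_three, Finset.sum_filter]
    norm_num [Fin.le_def, Fin.lt_def, Fin.ext_iff]
    rw [hs00, hs11, hs22, hs10, hs20, hs21, ha10, ha20, ha21, e01, e02, e12]
    linear_combination hsum / 3
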